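/- Let T be a thick tree, let G ≤ Aut(T), and suppose G is k-type-distance-transitive for some k ≥ 1. Then G is (k+1)-type-distance-transitive if and only if for every pair of vertices x, y with d(x, y) = k, the pointwise stabilizer G(x, y) (which automatically fixes the geodesic from x to y pointwise) acts transitively on S_y(x,1). -/

import Mathlib

/-- The pointwise stabilizer of a set of vertices, inside the full symmetric group. -/
def ptStab {V : Type*} (s : Set V) : Subgroup (Equiv.Perm V) where
  carrier := {g | ∀ v ∈ s, g v = v}
  one_mem' := by intro v _; rfl
  mul_mem' := by
    intro a b ha hb v hv
    simp only [Set.mem_setOf_eq] at *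
    rw [Equiv.Perm.mul_apply, hb v hv, ha v hv]
  inv_mem' := by
    intro a ha v hv
    simp only [Set.mem_setOf_eq] at *
    calc a⁻¹ v = a⁻¹ (a v) := by rw [ha v hv]
      _ = v := a.symm_apply_apply v

/-- `G` consists of automorphisms of the graph `T`. -/
def PreservesAdj {V : Type*} (T : SimpleGraph V) (G : Subgroup (Equiv.Perm V)) : Prop :=
  ∀ g ∈ G, ∀ a b : V, T.Adj a b ↔ T.Adj (g a) (g b)

/-- `G` is `k`-type-distance-transitive. -/
def TypeDistTrans {V : Type*} (T : SimpleGraph V) (G : Subgroup (Equiv.Perm V)) (k : ℕ) : Prop :=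
  ∀ x y x' y' : V, T.dist x y = k → T.dist x' y' = k → Even (T.dist x x') →
    ∃ g ∈ G, g x = x' ∧ g y = y'

/-- The tree is thick: every vertex has at least three neighbours. -/
def Thick {V : Type*} (T : SimpleGraph V) : Prop :=
  ∀ v : V, ∃ a b c : V, T.Adj v a ∧ T.Adj v b ∧ T.Adj v c ∧ a ≠ b ∧ a ≠ c ∧ b ≠ c

section Aux
variable {V : Type*} {T : SimpleGraph V}

private lemma concat_isPath {a b c : V} {p : T.Walk a b} (hp : p.IsPath) (h : T.Adj b c)
    (hc : c ∉ p.support) : (p.concat h).IsPath := by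
  rw [← SimpleGraph.Walk.isPath_reverse_iff, SimpleGraph.Walk.reverse_concat]
  exact hp.reverse.cons (by simpa [SimpleGraph.Walk.support_reverse] using hc)

/-- In a tree, geodesic distances of adjacent vertices to a root differ. -/
private lemma adj_ne_dist (hconn : T.Connected) (hacyc : T.IsAcyclic) {r u v : V}
    (h : T.Adj u v) : T.dist r u ≠ T.dist r v := by
  intro he
  classical
  obtain ⟨p, hp, hpl⟩ := hconn.exists_path_of_dist r u
  obtain ⟨q, hq, hql⟩ := hconn.exists_path_of_dist r v
  have hvp : v ∉ p.support := by
    intro hv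
    have h1 : (p.takeUntil v hv).length + (p.dropUntil v hv).length = p.length := by
      rw [← SimpleGraph.Walk.length_append, SimpleGraph.Walk.take_spec]
    have h2 : T.dist r v ≤ (p.takeUntil v hv).length := SimpleGraph.dist_le _
    have h3 : (p.dropUntil v hv).length ≠ 0 := by
      intro h0
      exact h.ne' (SimpleGraph.Walk.eq_of_length_eq_zero h0)
    omega
  have hcp : (p.concat h).IsPath := concat_isPath hp h hvp
  have huniq := hacyc.path_unique ⟨p.concat h, hcp⟩ ⟨q, hq⟩
  have hl : (p.concat h).length = q.length :=
    congrArg (fun P : T.Path r v => P.1.length) huniq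
  rw [SimpleGraph.Walk.length_concat] at hl
  omega

private lemma walk_parity (hconn : T.Connected) (hacyc : T.IsAcyclic) (r : V) :
    ∀ {a b : V} (w : T.Walk a b), (w.length + T.dist r a + T.dist r b) % 2 = 0 := by
  intro a b w
  induction w with
  | nil => simp only [SimpleGraph.Walk.length_nil]; omega
  | @cons a a' b h w ih =>
    have h1 : T.dist r a ≠ T.dist r a' := adj_ne_dist hconn hacyc h
    have h2 : T.dist r a ≤ T.dist r a' + 1 := by
      have := hconn.dist_triangle (u := r) (v := a') (w := a)
      have ha : T.dist a' a = 1 := SimpleGraph.dist_eq_one_iff_adj.mpr h.symm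
      omega
    have h3 : T.dist r a' ≤ T.dist r a + 1 := by
      have := hconn.dist_triangle (u := r) (v := a) (w := a')
      have ha : T.dist a a' = 1 := SimpleGraph.dist_eq_one_iff_adj.mpr h
      omega
    simp only [SimpleGraph.Walk.length_cons] at *
    omega

private lemma dist_parity (hconn : T.Connected) (hacyc : T.IsAcyclic) (r a b : V) :
    (T.dist a b + T.dist r a + T.dist r b) % 2 = 0 := by
  obtain ⟨w, hw⟩ := hconn.exists_walk_length_eq_dist a b
  have := walk_parity hconn hacyc r w
  omega

private lemma dist_perm {G : Subgroup (Equiv.Perm V)} (hconn : T.Connected)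
    (hG : PreservesAdj T G) {g : Equiv.Perm V} (hg : g ∈ G) (a b : V) :
    T.dist (g a) (g b) = T.dist a b := by
  have key : ∀ h : Equiv.Perm V, h ∈ G → ∀ a b : V, T.dist (h a) (h b) ≤ T.dist a b := by
    intro h hh a b
    obtain ⟨w, hw⟩ := hconn.exists_walk_length_eq_dist a b
    have hd := SimpleGraph.dist_le
      (w.map ⟨h, fun hadj => (hG h hh _ _).mp hadj⟩)
    rwa [SimpleGraph.Walk.length_map, hw] at hd
  refine le_antisymm (key g hg a b) ?_
  have := key g⁻¹ (inv_mem hg) (g a) (g b)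
  simpa using this

/-- In a tree, the neighbour of `w` strictly closer to `y` is unique. -/
private lemma unique_nbr (hconn : T.Connected) (hacyc : T.IsAcyclic) {y w x x' : V}
    (hx : T.Adj w x) (hx' : T.Adj w x')
    (hd : T.dist y x < T.dist y w) (hd' : T.dist y x' < T.dist y w) : x = x' := by
  classical
  have build : ∀ {z : V} (hz : T.Adj w z) (hdz : T.dist y z < T.dist y w),
      ∃ q : T.Walk y w, q.IsPath ∧ q.reverse.getVert 1 = z := by
    intro z hz hdz
    obtain ⟨p, hp, hpl⟩ := hconn.exists_path_of_dist y z
    have hwp : w ∉ p.support := by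
      intro hw
      have h2 : T.dist y w ≤ (p.takeUntil w hw).length := SimpleGraph.dist_le _
      have h3 := SimpleGraph.Walk.length_takeUntil_le p hw
      omega
    refine ⟨p.concat hz.symm, concat_isPath hp hz.symm hwp, ?_⟩
    rw [SimpleGraph.Walk.reverse_concat]
    exact (SimpleGraph.Walk.getVert_cons_succ _ _).trans (SimpleGraph.Walk.getVert_zero _)
  obtain ⟨q, hq, hq1⟩ := build hx hd
  obtain ⟨q', hq', hq1'⟩ := build hx' hd'
  have huniq := hacyc.path_unique ⟨q, hq⟩ ⟨q', hq'⟩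
  have : q = q' := congrArg (fun P : T.Path y w => P.1) huniq
  rw [← hq1, ← hq1', this]

private lemma step_down (hconn : T.Connected) {x y : V} {k : ℕ} (h : T.dist x y = k + 1) :
    ∃ z : V, T.Adj x z ∧ T.dist z y = k := by
  obtain ⟨p, hp⟩ := hconn.exists_walk_length_eq_dist x y
  cases p with
  | nil => rw [SimpleGraph.Walk.length_nil] at hp; omega
  | @cons _ z _ h' q =>
    refine ⟨z, h', ?_⟩
    have h1 : T.dist z y ≤ q.length := SimpleGraph.dist_le q
    have h2 := hconn.dist_triangle (u := x) (v := z) (w := y)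
    have h3 : T.dist x z = 1 := SimpleGraph.dist_eq_one_iff_adj.mpr h'
    rw [SimpleGraph.Walk.length_cons] at hp
    omega

end Aux

/-- If `G` is `k`-type-distance-transitive on the thick tree `T`
(`k ≥ 1`), then `G` is `(k+1)`-type-distance-transitive if and only if for all vertices
`x, y` with `d(x,y) = k`, the pointwise stabilizer `G(x,y)` acts transitively on
`S_y(x,1)`, the set of neighbours `w` of `x` with `d(w,y) = d(x,y) + 1`. -/
theorem succ_type_distance_transitive_iff_stabilizer_transitive
    {V : Type*} (T : SimpleGraph V) (hconn : T.Connected) (hacyc : T.IsAcyclic)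
    (hthick : Thick T)
    (G : Subgroup (Equiv.Perm V)) (hG : PreservesAdj T G)
    (k : ℕ) (hk : 1 ≤ k) (hTDT : TypeDistTrans T G k) :
    TypeDistTrans T G (k + 1) ↔
      ∀ x y : V, T.dist x y = k →
        ∀ w w' : V, T.Adj x w → T.Adj x w' →
          T.dist w y = T.dist x y + 1 → T.dist w' y = T.dist x y + 1 →
          ∃ g ∈ G, g x = x ∧ g y = y ∧ g w = w' := by
  constructor
  · -- (k+1)-TDT implies stabilizer transitivity
    intro hT1 x y hxy w w' hw hw' hdw hdw'
    rw [hxy] at hdw hdw'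
    have hpar : T.dist w w' % 2 = 0 := by
      have h1 := dist_parity hconn hacyc x w w'
      have h2 : T.dist x w = 1 := SimpleGraph.dist_eq_one_iff_adj.mpr hw
      have h3 : T.dist x w' = 1 := SimpleGraph.dist_eq_one_iff_adj.mpr hw'
      omega
    obtain ⟨g, hgG, hgw, hgy⟩ := hT1 w y w' y hdw hdw' (Nat.even_iff.mpr hpar)
    have hadj : T.Adj w' (g x) := by
      have := (hG g hgG w x).mp hw.symm
      rwa [hgw] at this
    have hdist : T.dist y (g x) = k := by
      have h1 : T.dist (g y) (g x) = T.dist y x := dist_perm hconn hG hgG y x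
      rw [hgy, SimpleGraph.dist_comm (G := T) (u := y) (v := x), hxy] at h1
      exact h1
    have hgxx : g x = x := by
      refine unique_nbr hconn hacyc (y := y) (w := w') hadj hw'.symm ?_ ?_
      · rw [hdist, SimpleGraph.dist_comm (G := T) (u := y) (v := w'), hdw']; omega
      · rw [SimpleGraph.dist_comm (G := T) (u := y) (v := x), hxy, SimpleGraph.dist_comm (G := T) (u := y) (v := w'), hdw']; omega
    exact ⟨g, hgG, hgxx, hgy, hgw⟩
  · -- stabilizer transitivity implies (k+1)-TDT
    intro hstab x y x' y' hxy hx'y' heven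
    obtain ⟨z, hz, hdz⟩ := step_down hconn hxy
    obtain ⟨z', hz', hdz'⟩ := step_down hconn hx'y'
    have hpar : T.dist y y' % 2 = 0 := by
      have P1 := dist_parity hconn hacyc x y y'
      have P2 := dist_parity hconn hacyc x x' y'
      have he := Nat.even_iff.mp heven
      rw [hx'y'] at P2
      rw [hxy] at P1
      omega
    obtain ⟨g, hgG, hgy, hgz⟩ := hTDT y z y' z'
      (by rwa [SimpleGraph.dist_comm]) (by rwa [SimpleGraph.dist_comm])
      (Nat.even_iff.mpr hpar)
    have hadjw : T.Adj z' (g x) := by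
      have := (hG g hgG z x).mp hz.symm
      rwa [hgz] at this
    have hdistw : T.dist (g x) y' = k + 1 := by
      have h1 : T.dist (g x) (g y) = T.dist x y := dist_perm hconn hG hgG x y
      rwa [hgy, hxy] at h1
    obtain ⟨h, hhG, -, hhy', hhgx⟩ := hstab z' y' hdz' (g x) x' hadjw hz'.symm
      (by rw [hdz', hdistw]) (by rw [hdz', hx'y'])
    refine ⟨h * g, mul_mem hhG hgG, ?_, ?_⟩
    · rw [Equiv.Perm.mul_apply, hhgx]
    · rw [Equiv.Perm.mul_apply, hgy, hhy']
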